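/- arXiv:1007.3173 — 2 statements merged into one kernel-verified Lean document; each statement's English description precedes it below -/
import Mathlib

section
/- Let M₁ be a unital complex *-algebra, M₀ ⊆ M₁ a unital *-subalgebra, E : M₁ → M₀ a conditional expectation with E(x*) = E(x)*, and B ⊆ M₁ a Pimsner–Popa basis for M₁ over M₀ relative to E. Let P be a unital complex *-algebra containing M₁ as a unital *-subalgebra, and let p ∈ P be a projection (p = p* = p²) such that (1) p·w·p = E(w)·p for all w ∈ M₁, and (2) the map z ↦ z·p is injective on M₀. Then the map ψ : M₁ ⊗_{M₀} M₁ → P determined by ψ(x ⊗ y) = x·p·y is a well-defined, injective homomorphism of *-algebras and of M₁–M₁-bimodules whose image is M₁pM₁ := span{x·p·y : x, y ∈ M₁}. -/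
open scoped TensorProduct

noncomputable section

variable (M₁ : Type*) [Ring M₁] [Algebra ℂ M₁] [StarRing M₁] [StarModule ℂ M₁]
  (M₀ : StarSubalgebra ℂ M₁)

/-- The subspace of `M₁ ⊗_ℂ M₁` spanned by the balancing relations
`x·z ⊗ y − x ⊗ z·y` for `z ∈ M₀`. -/
def relTensor : Submodule ℂ (M₁ ⊗[ℂ] M₁) :=
  Submodule.span ℂ
    {u | ∃ (x y : M₁) (z : M₀), u = (x * (z : M₁)) ⊗ₜ[ℂ] y - x ⊗ₜ[ℂ] ((z : M₁) * y)}

/-- The balanced tensor product `M₁ ⊗_{M₀} M₁`. -/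
abbrev X2 := (M₁ ⊗[ℂ] M₁) ⧸ relTensor M₁ M₀

/-- The class of the elementary tensor `x ⊗ y` in `M₁ ⊗_{M₀} M₁`. -/
def mk2 (x y : M₁) : X2 M₁ M₀ := Submodule.Quotient.mk (x ⊗ₜ[ℂ] y)

variable {M₁ M₀}

/-- Lift a balanced bilinear map to the balanced tensor product. -/
def liftBalanced {N : Type*} [AddCommGroup N] [Module ℂ N]
    (f : M₁ →ₗ[ℂ] M₁ →ₗ[ℂ] N)
    (hf : ∀ (x y : M₁) (z : M₀), f (x * (z : M₁)) y = f x ((z : M₁) * y)) :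
    X2 M₁ M₀ →ₗ[ℂ] N :=
  Submodule.liftQ _ (TensorProduct.lift f) (by
    rw [relTensor, Submodule.span_le]
    rintro u ⟨x, y, z, rfl⟩
    simp only [SetLike.mem_coe, LinearMap.mem_ker, map_sub, TensorProduct.lift.tmul,
      hf x y z, sub_self])

@[simp] lemma liftBalanced_mk2 {N : Type*} [AddCommGroup N] [Module ℂ N]
    (f : M₁ →ₗ[ℂ] M₁ →ₗ[ℂ] N) (hf) (x y : M₁) :
    liftBalanced f hf (mk2 M₁ M₀ x y) = f x y := rfl

variable (M₁ M₀)

/-- Given a conditional expectation `E : M₁ → M₀` with a Pimsner–Popa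
basis `B`, a unital `*`-algebra `P ⊇ M₁` (inclusion `ι`) and a projection `p ∈ P` with
`p·w·p = E(w)·p` for all `w ∈ M₁` and `z ↦ z·p` injective on `M₀`, the map
`ψ : M₁ ⊗_{M₀} M₁ → P`, `x ⊗ y ↦ x·p·y`, is a well-defined injective `ℂ`-linear map,
a homomorphism for the `*`-algebra structure of `M₁ ⊗_{M₀} M₁`
(`(x₁⊗y₁)(x₂⊗y₂) = x₁ ⊗ E(y₁x₂)y₂`, `(x⊗y)* = y*⊗x*`), an `M₁–M₁`-bimodule map, and
its image is `M₁ p M₁ = span{x·p·y}`. -/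
theorem basic_construction_embedding
    (E : M₁ →ₗ[ℂ] M₁)
    (hE_mem : ∀ x : M₁, E x ∈ M₀)
    (hE_fix : ∀ a ∈ M₀, E a = a)
    (hE_bimod : ∀ a ∈ M₀, ∀ b ∈ M₀, ∀ x : M₁, E (a * x * b) = a * E x * b)
    (hE_star : ∀ x : M₁, E (star x) = star (E x))
    (B : Finset M₁) (hB : ∀ x : M₁, x = ∑ b ∈ B, b * E (star b * x))
    (P : Type*) [Ring P] [Algebra ℂ P] [StarRing P] [StarModule ℂ P]
    (ι : M₁ →⋆ₐ[ℂ] P) (hι : Function.Injective ι)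
    (p : P) (hp_star : star p = p) (hp_idem : p * p = p)
    (hpwp : ∀ w : M₁, p * ι w * p = ι (E w) * p)
    (hinj : ∀ z w : M₀, ι (z : M₁) * p = ι (w : M₁) * p → z = w) :
    ∃ ψ : X2 M₁ M₀ →ₗ[ℂ] P,
      (∀ x y : M₁, ψ (mk2 M₁ M₀ x y) = ι x * p * ι y) ∧
      Function.Injective ψ ∧
      (∀ x₁ y₁ x₂ y₂ : M₁,
        ψ (mk2 M₁ M₀ x₁ y₁) * ψ (mk2 M₁ M₀ x₂ y₂) = ψ (mk2 M₁ M₀ x₁ (E (y₁ * x₂) * y₂))) ∧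
      (∀ x y : M₁, star (ψ (mk2 M₁ M₀ x y)) = ψ (mk2 M₁ M₀ (star y) (star x))) ∧
      (∀ w w' x y : M₁,
        ψ (mk2 M₁ M₀ (w * x) (y * w')) = ι w * ψ (mk2 M₁ M₀ x y) * ι w') ∧
      LinearMap.range ψ = Submodule.span ℂ {q : P | ∃ x y : M₁, q = ι x * p * ι y} := by
  classical
  -- E is left/right M₀-linear
  have hE_left : ∀ z ∈ M₀, ∀ x : M₁, E ((z : M₁) * x) = z * E x := by
    intro z hz x
    have := hE_bimod z hz 1 (one_mem M₀) x
    simpa using this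
  have hE_right : ∀ z ∈ M₀, ∀ x : M₁, E (x * z) = E x * z := by
    intro z hz x
    have := hE_bimod 1 (one_mem M₀) z hz x
    simpa using this
  -- p commutes with ι z for z ∈ M₀
  have pcomm : ∀ z ∈ M₀, ι z * p = p * ι z := by
    intro z hz
    have hA : ∀ w ∈ M₀, p * ι w * p = ι w * p := fun w hw => by
      rw [hpwp w, hE_fix w hw]
    have h1 := hA z hz
    have h2 := congrArg star (hA (star z) (star_mem hz))
    simp only [star_mul, star_star, hp_star, map_star] at h2
    -- h2 : p * ι z * p = p * ι z  (after reassociation)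
    rw [← h1]
    rw [mul_assoc]; exact h2
  -- basic facts about mk2
  have hbal : ∀ (x y : M₁) (z : M₀), mk2 M₁ M₀ (x * (z : M₁)) y = mk2 M₁ M₀ x ((z : M₁) * y) := by
    intro x y z
    rw [mk2, mk2, Submodule.Quotient.eq]
    exact Submodule.subset_span ⟨x, y, z, rfl⟩
  -- the map ψ
  set ψ : X2 M₁ M₀ →ₗ[ℂ] P :=
    liftBalanced (LinearMap.mk₂ ℂ (fun x y => ι x * p * ι y)
      (fun x x' y => by simp [map_add, add_mul])
      (fun c x y => by simp [map_smul, smul_mul_assoc])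
      (fun x y y' => by simp [map_add, mul_add])
      (fun c x y => by simp [map_smul, mul_smul_comm]))
      (fun x y z => by
        simp only [LinearMap.mk₂_apply, map_mul]
        rw [mul_assoc (ι x), pcomm _ z.2, ← mul_assoc, ← mul_assoc]) with hψdef
  have hψ : ∀ x y : M₁, ψ (mk2 M₁ M₀ x y) = ι x * p * ι y := fun x y => rfl
  -- coefficient maps
  set Cb : M₁ → (X2 M₁ M₀ →ₗ[ℂ] M₁) := fun b =>
    liftBalanced (LinearMap.mk₂ ℂ (fun x y => E (star b * x) * y)
      (fun x x' y => by simp [mul_add, map_add, add_mul])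
      (fun c x y => by simp [mul_smul_comm, map_smul, smul_mul_assoc])
      (fun x y y' => by simp [mul_add])
      (fun c x y => by simp [mul_smul_comm]))
      (fun x y z => by
        simp only [LinearMap.mk₂_apply]
        rw [← mul_assoc, hE_right _ z.2, mul_assoc]) with hCbdef
  have hCb : ∀ b x y : M₁, Cb b (mk2 M₁ M₀ x y) = E (star b * x) * y := fun b x y => rfl
  -- expansion: t = ∑ b ∈ B, mk2 b (Cb b t)
  have mk2_zero : ∀ x : M₁, mk2 M₁ M₀ x 0 = 0 := by
    intro x; simp [mk2, TensorProduct.tmul_zero]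
  have mk2_addr : ∀ x a a' : M₁, mk2 M₁ M₀ x (a + a') = mk2 M₁ M₀ x a + mk2 M₁ M₀ x a' := by
    intro x a a'; simp [mk2, TensorProduct.tmul_add]
  have mk2_suml : ∀ (y : M₁) (s : Finset M₁) (g : M₁ → M₁),
      mk2 M₁ M₀ (∑ b ∈ s, g b) y = ∑ b ∈ s, mk2 M₁ M₀ (g b) y := by
    intro y s g
    have : ∀ x : M₁, mk2 M₁ M₀ x y =
        ((relTensor M₁ M₀).mkQ ∘ₗ (TensorProduct.mk ℂ M₁ M₁).flip y) x := fun x => rfl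
    simp only [this, map_sum]
  have hexp : ∀ t : X2 M₁ M₀, t = ∑ b ∈ B, mk2 M₁ M₀ b (Cb b t) := by
    intro t
    obtain ⟨u, rfl⟩ := Submodule.Quotient.mk_surjective _ t
    induction u using TensorProduct.induction_on with
    | zero => simp [Submodule.Quotient.mk_zero, mk2_zero]
    | tmul x y =>
        have h1 : ∀ b ∈ B, mk2 M₁ M₀ b (Cb b (mk2 M₁ M₀ x y)) =
            mk2 M₁ M₀ (b * E (star b * x)) y := by
          intro b _
          rw [hCb, hbal b y ⟨E (star b * x), hE_mem _⟩]
        rw [show (Submodule.Quotient.mk (x ⊗ₜ[ℂ] y) : X2 M₁ M₀) = mk2 M₁ M₀ x y from rfl,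
          Finset.sum_congr rfl h1, ← mk2_suml, ← hB x]
    | add u v hu hv =>
        rw [Submodule.Quotient.mk_add]
        simp only [map_add, mk2_addr, Finset.sum_add_distrib, ← hu, ← hv]
  -- algebra helpers
  have hkey0 : ∀ x : M₁, p * (ι x * p) = ι (E x) * p := by
    intro x; rw [← mul_assoc, hpwp]
  have hkey : ∀ (x : M₁) (q : P), p * (ι x * (p * q)) = ι (E x) * (p * q) := by
    intro x q
    rw [← mul_assoc, ← mul_assoc, hpwp, mul_assoc]
  -- the fundamental identity
  have hK : ∀ (b w : M₁) (t : X2 M₁ M₀),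
      p * ι (star b) * ψ t * (ι w * p) = ι (E (Cb b t * w)) * p := by
    intro b w t
    obtain ⟨u, rfl⟩ := Submodule.Quotient.mk_surjective _ t
    induction u using TensorProduct.induction_on with
    | zero => simp [Submodule.Quotient.mk_zero]
    | tmul x y =>
        rw [show (Submodule.Quotient.mk (x ⊗ₜ[ℂ] y) : X2 M₁ M₀) = mk2 M₁ M₀ x y from rfl,
          hψ, hCb]
        calc p * ι (star b) * (ι x * p * ι y) * (ι w * p)
            = p * (ι (star b * x) * (p * (ι (y * w) * p))) := by
              simp only [map_mul]; noncomm_ring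
          _ = p * (ι (star b * x) * (ι (E (y * w)) * p)) := by rw [hkey0]
          _ = p * (ι (star b * x * E (y * w)) * p) := by
              simp only [map_mul]; noncomm_ring
          _ = ι (E (star b * x * E (y * w))) * p := hkey0 _
          _ = ι (E (E (star b * x) * y * w)) * p := by
              rw [hE_right _ (hE_mem (y * w)), mul_assoc (E (star b * x)) y w,
                hE_left _ (hE_mem (star b * x))]
    | add u v hu hv =>
        rw [Submodule.Quotient.mk_add]
        simp only [map_add, add_mul, mul_add, hu, hv]
  -- if ψ t = 0 then all coefficients vanish
  have hzero : ∀ t : X2 M₁ M₀, ψ t = 0 → ∀ b w : M₁, E (Cb b t * w) = 0 := by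
    intro t ht b w
    have h := hK b w t
    rw [ht, mul_zero, zero_mul] at h
    have := hinj ⟨E (Cb b t * w), hE_mem _⟩ 0 (by simpa using h.symm)
    simpa using congrArg Subtype.val this
  -- a ≠ 0 detection lemma
  have hL2 : ∀ d : M₁, (∀ w : M₁, E (d * w) = 0) → d = 0 := by
    intro d hd
    have h2 := congrArg star (hB (star d))
    rw [star_star] at h2
    rw [h2, star_sum]
    apply Finset.sum_eq_zero
    intro b _
    rw [star_mul, ← hE_star (star b * star d), star_mul, star_star, star_star, hd b, zero_mul]
  -- injectivity
  have hinjψ : Function.Injective ψ := by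
    rw [← LinearMap.ker_eq_bot, Submodule.eq_bot_iff]
    intro t ht
    rw [LinearMap.mem_ker] at ht
    have hC : ∀ b : M₁, Cb b t = 0 := fun b => hL2 _ (hzero t ht b)
    rw [hexp t]
    apply Finset.sum_eq_zero
    intro b _
    rw [hC b, mk2_zero]
  refine ⟨ψ, hψ, hinjψ, ?_, ?_, ?_, ?_⟩
  · -- multiplicativity
    intro x₁ y₁ x₂ y₂
    rw [hψ, hψ, hψ]
    calc (ι x₁ * p * ι y₁) * (ι x₂ * p * ι y₂)
        = ι x₁ * (p * (ι (y₁ * x₂) * (p * ι y₂))) := by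
          simp only [map_mul]; noncomm_ring
      _ = ι x₁ * (ι (E (y₁ * x₂)) * (p * ι y₂)) := by rw [hkey]
      _ = ι x₁ * (ι (E (y₁ * x₂)) * p * ι y₂) := by noncomm_ring
      _ = ι x₁ * (p * ι (E (y₁ * x₂)) * ι y₂) := by rw [pcomm _ (hE_mem _)]
      _ = ι x₁ * p * ι (E (y₁ * x₂) * y₂) := by simp only [map_mul]; noncomm_ring
  · -- star
    intro x y
    rw [hψ, hψ]
    simp only [star_mul, hp_star, map_star, mul_assoc]
  · -- bimodule
    intro w w' x y
    rw [hψ, hψ]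
    simp only [map_mul]; noncomm_ring
  · -- range
    apply le_antisymm
    · rintro q ⟨t, rfl⟩
      obtain ⟨u, rfl⟩ := Submodule.Quotient.mk_surjective _ t
      induction u using TensorProduct.induction_on with
      | zero => rw [Submodule.Quotient.mk_zero, map_zero]; exact zero_mem _
      | tmul x y =>
          rw [show (Submodule.Quotient.mk (x ⊗ₜ[ℂ] y) : X2 M₁ M₀) = mk2 M₁ M₀ x y from rfl,
            hψ]
          exact Submodule.subset_span ⟨x, y, rfl⟩
      | add u v hu hv =>
          rw [Submodule.Quotient.mk_add, map_add]
          exact add_mem hu hv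
    · rw [Submodule.span_le]
      rintro q ⟨x, y, rfl⟩
      exact ⟨mk2 M₁ M₀ x y, hψ x y⟩
end
end

section
/- Let M₁ be a unital complex *-algebra, M₀ ⊆ M₁ a unital *-subalgebra, tr a faithful trace on M₁, E : M₁ → M₀ the trace-preserving conditional expectation, and B a Pimsner–Popa basis for M₁ over M₀ with Σ_{b∈B} b·b* = d²·1 for some real d > 0. Let P be a unital complex *-algebra containing M₁ as a unital *-subalgebra and p ∈ P a projection with p·w·p = E(w)·p for all w ∈ M₁, with z ↦ z·p injective on M₀, and with P = span{x·p·y : x, y ∈ M₁}. Suppose tr_P is a faithful trace on P extending tr with tr_P(x·p·y) = d⁻²·tr(x·y) for all x, y ∈ M₁. Then: (a) Σ_{b∈B} b·p·b* = 1; (b) the linear map E₁ : P → M₁ determined by E₁(x·p·y) = d⁻²·x·y (for x, y ∈ M₁) is well defined and is a trace-preserving conditional expectation onto M₁; (c) the set {d·b·p : b ∈ B} is a Pimsner–Popa basis for P over M₁ relative to E₁, and Σ_{b∈B} (d·b·p)(d·b·p)* = d²·1, so the Watatani index of M₁ ⊆ P equals the Watatani index d² of M₀ ⊆ M₁. -/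
open scoped ComplexOrder

noncomputable section

/-- Let `M₀ ⊆ M₁` with faithful trace `tr`, trace-preserving conditional
expectation `E`, and Pimsner–Popa basis `B` with `∑ b b* = d²·1` (`d > 0`).  Let `P ⊇ M₁`
(inclusion `ι`) with a projection `p` implementing `E`, `z ↦ z·p` injective on `M₀`,
`P = span{x·p·y}`, and a faithful trace `tr_P` extending `tr` with
`tr_P(x p y) = d⁻² tr(xy)`.  Then:
(a) `∑_{b∈B} b p b* = 1`;
(b) there is a well-defined trace-preserving conditional expectation `E₁ : P → M₁` with
    `E₁(x p y) = d⁻² x y`;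
(c) `{d·b·p : b ∈ B}` is a Pimsner–Popa basis for `P` over `M₁` relative to `E₁`, and
    `∑_{b∈B} (d b p)(d b p)* = d²·1`, i.e. the Watatani index of `M₁ ⊆ P` equals the
    Watatani index `d²` of `M₀ ⊆ M₁`. -/
theorem basic_construction_strongly_Markov
    (M₁ : Type*) [Ring M₁] [Algebra ℂ M₁] [StarRing M₁] [StarModule ℂ M₁]
    (M₀ : StarSubalgebra ℂ M₁)
    (tr : M₁ →ₗ[ℂ] ℂ)
    (htr_one : tr 1 = 1)
    (htr_comm : ∀ x y : M₁, tr (x * y) = tr (y * x))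
    (htr_faithful : ∀ x : M₁, x ≠ 0 → 0 < tr (star x * x))
    (E : M₁ →ₗ[ℂ] M₁)
    (hE_mem : ∀ x : M₁, E x ∈ M₀)
    (hE_fix : ∀ a ∈ M₀, E a = a)
    (hE_bimod : ∀ a ∈ M₀, ∀ b ∈ M₀, ∀ x : M₁, E (a * x * b) = a * E x * b)
    (hE_star : ∀ x : M₁, E (star x) = star (E x))
    (hE_tr : ∀ x : M₁, tr (E x) = tr x)
    (B : Finset M₁) (hB : ∀ x : M₁, x = ∑ b ∈ B, b * E (star b * x))
    (d : ℝ) (hd : 0 < d)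
    (hBsum : ∑ b ∈ B, b * star b = ((d : ℂ) ^ 2) • (1 : M₁))
    (P : Type*) [Ring P] [Algebra ℂ P] [StarRing P] [StarModule ℂ P]
    (ι : M₁ →⋆ₐ[ℂ] P) (hι : Function.Injective ι)
    (p : P) (hp_star : star p = p) (hp_idem : p * p = p)
    (hpwp : ∀ w : M₁, p * ι w * p = ι (E w) * p)
    (hinj : ∀ z w : M₀, ι (z : M₁) * p = ι (w : M₁) * p → z = w)
    (hspan : Submodule.span ℂ {q : P | ∃ x y : M₁, q = ι x * p * ι y} = ⊤)
    (trP : P →ₗ[ℂ] ℂ)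
    (htrP_one : trP 1 = 1)
    (htrP_comm : ∀ q r : P, trP (q * r) = trP (r * q))
    (htrP_faithful : ∀ q : P, q ≠ 0 → 0 < trP (star q * q))
    (htrP_ext : ∀ x : M₁, trP (ι x) = tr x)
    (htrP_p : ∀ x y : M₁, trP (ι x * p * ι y) = (((d : ℂ) ^ 2)⁻¹) * tr (x * y)) :
    -- (a)
    (∑ b ∈ B, ι b * p * ι (star b) = 1) ∧
    -- (b) and (c)
    ∃ E₁ : P →ₗ[ℂ] P,
      (∀ x y : M₁, E₁ (ι x * p * ι y) = (((d : ℂ) ^ 2)⁻¹) • ι (x * y)) ∧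
      (∀ q : P, ∃ m : M₁, E₁ q = ι m) ∧
      (∀ x : M₁, E₁ (ι x) = ι x) ∧
      (∀ (a : M₁) (q : P), E₁ (ι a * q) = ι a * E₁ q ∧ E₁ (q * ι a) = E₁ q * ι a) ∧
      (∀ q : P, E₁ (star q) = star (E₁ q)) ∧
      (∀ q : P, trP (E₁ q) = trP q) ∧
      -- (c): {d·b·p} is a Pimsner–Popa basis for P over M₁ relative to E₁ ...
      (∀ q : P, q = ∑ b ∈ B, ((d : ℂ) • (ι b * p)) * E₁ (star ((d : ℂ) • (ι b * p)) * q)) ∧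
      -- ... with Watatani index d²
      (∑ b ∈ B, ((d : ℂ) • (ι b * p)) * star ((d : ℂ) • (ι b * p)) = ((d : ℂ) ^ 2) • (1 : P)) := by
    classical
  have hd0 : (d : ℂ) ≠ 0 := by
    simp only [ne_eq, Complex.ofReal_eq_zero]
    exact ne_of_gt hd
  have hd2 : ((d : ℂ) ^ 2) ≠ 0 := pow_ne_zero _ hd0
  have hstar_d : star ((d : ℂ)) = (d : ℂ) := by
    simp [Complex.star_def, Complex.conj_ofReal]
  -- membership of everything in the span
  have hmemspan : ∀ q : P,
      q ∈ Submodule.span ℂ {q : P | ∃ x y : M₁, q = ι x * p * ι y} := by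
    intro q; rw [hspan]; trivial
  -- p commutes with ι of elements of M₀
  have hcomm : ∀ z : M₁, z ∈ M₀ → ι z * p = p * ι z := by
    intro z hz
    by_contra hne
    have hr : ι z * p - p * ι z ≠ 0 := sub_ne_zero.mpr hne
    have hpos := htrP_faithful _ hr
    have hsz : star z ∈ M₀ := star_mem hz
    have hzz : star z * z ∈ M₀ := mul_mem hsz hz
    have e1 : p * ι (star z) * p = ι (star z) * p := by rw [hpwp, hE_fix _ hsz]
    have e2 : p * ι z * p = ι z * p := by rw [hpwp, hE_fix _ hz]
    have e3 : p * ι (star z * z) * p = ι (star z * z) * p := by rw [hpwp, hE_fix _ hzz]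
    have hst : star (ι z * p - p * ι z) = p * ι (star z) - ι (star z) * p := by
      rw [star_sub, star_mul, star_mul, hp_star, ← map_star ι]
    have hzero : star (ι z * p - p * ι z) * (ι z * p - p * ι z) = 0 := by
      calc star (ι z * p - p * ι z) * (ι z * p - p * ι z)
          = (p * ι (star z * z) * p) - (p * ι (star z) * p) * ι z
            - ι (star z) * (p * ι z * p) + ι (star z) * ((p * p) * ι z) := by
            rw [hst, map_mul]; noncomm_ring
        _ = (ι (star z * z) * p) - (ι (star z) * p) * ι z
            - ι (star z) * (ι z * p) + ι (star z) * (p * ι z) := by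
            rw [e3, e1, e2, hp_idem]
        _ = 0 := by rw [map_mul ι]; noncomm_ring
    rw [hzero, map_zero] at hpos
    exact lt_irrefl _ hpos
  -- (a)
  have hA : (∑ b ∈ B, ι b * p * ι (star b)) = 1 := by
    have hact : ∀ x y : M₁,
        (∑ b ∈ B, ι b * p * ι (star b)) * (ι x * p * ι y) = ι x * p * ι y := by
      intro x y
      rw [Finset.sum_mul]
      have hterm : ∀ b ∈ B, (ι b * p * ι (star b)) * (ι x * p * ι y)
          = ι (b * E (star b * x)) * (p * ι y) := by
        intro b _
        calc (ι b * p * ι (star b)) * (ι x * p * ι y)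
            = ι b * (p * ι (star b * x) * p) * ι y := by rw [map_mul ι]; noncomm_ring
          _ = ι b * (ι (E (star b * x)) * p) * ι y := by rw [hpwp]
          _ = ι (b * E (star b * x)) * (p * ι y) := by rw [map_mul ι]; noncomm_ring
      rw [Finset.sum_congr rfl hterm, ← Finset.sum_mul, ← map_sum, ← hB x, mul_assoc]
    have hall : ∀ q : P, (∑ b ∈ B, ι b * p * ι (star b)) * q = q := by
      intro q
      refine Submodule.span_induction ?_ ?_ ?_ ?_ (hmemspan q)
      · rintro t ⟨x, y, rfl⟩; exact hact x y
      · rw [mul_zero]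
      · intro a b _ _ ha hb; rw [mul_add, ha, hb]
      · intro c a _ ha; rw [mul_smul_comm, ha]
    have := hall 1; rwa [mul_one] at this
  -- the embedding M₁ → duals via tr
  let φ : M₁ →ₗ[ℂ] (M₁ →ₗ[ℂ] ℂ) :=
    { toFun := fun m => tr ∘ₗ LinearMap.mulRight ℂ m
      map_add' := by intro a b; ext w; simp [mul_add]
      map_smul' := by intro c a; ext w; simp [mul_smul_comm] }
  have hφ_apply : ∀ m w : M₁, φ m w = tr (w * m) := fun _ _ => rfl
  have hφinj : Function.Injective φ := by
    intro a b hab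
    by_contra hne
    have hm : a - b ≠ 0 := sub_ne_zero.mpr hne
    have h0 : φ (a - b) = 0 := by rw [map_sub, hab, sub_self]
    have hpos := htr_faithful _ hm
    have h1 : tr (star (a - b) * (a - b)) = 0 := by
      have h2 := congrArg (fun f : M₁ →ₗ[ℂ] ℂ => f (star (a - b))) h0
      rw [← hφ_apply]
      simpa only [LinearMap.zero_apply] using h2
    rw [h1] at hpos
    exact lt_irrefl _ hpos
  -- the functional-valued map on P
  let Ψ : P →ₗ[ℂ] (M₁ →ₗ[ℂ] ℂ) :=
    { toFun := fun q => ((d : ℂ) ^ 2) • (trP ∘ₗ (LinearMap.mulLeft ℂ q ∘ₗ ι.toAlgHom.toLinearMap))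
      map_add' := by intro a b; ext w; simp [add_mul, mul_add]
      map_smul' := by
        intro c a; ext w
        simp [smul_mul_assoc]
        ring }
  have hΨ_apply : ∀ (q : P) (w : M₁), Ψ q w = ((d : ℂ) ^ 2) * trP (q * ι w) := fun _ _ => rfl
  have hΨspan : ∀ x y : M₁, Ψ (ι x * p * ι y) = φ (x * y) := by
    intro x y
    ext w
    rw [hΨ_apply, hφ_apply]
    have h1 : (ι x * p * ι y) * ι w = ι x * p * ι (y * w) := by rw [map_mul ι]; noncomm_ring
    rw [h1, htrP_p, ← mul_assoc x y w, htr_comm, ← mul_assoc, mul_inv_cancel₀ hd2, one_mul]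
  have hΨmem : ∀ q : P, Ψ q ∈ LinearMap.range φ := by
    intro q
    refine Submodule.span_induction ?_ ?_ ?_ ?_ (hmemspan q)
    · rintro t ⟨x, y, rfl⟩; exact ⟨x * y, (hΨspan x y).symm⟩
    · rw [map_zero]; exact zero_mem _
    · intro a b _ _ ha hb; rw [map_add]; exact Submodule.add_mem _ ha hb
    · intro c a _ ha; rw [map_smul]; exact Submodule.smul_mem _ _ ha
  -- construction of E₁
  let eφ : M₁ ≃ₗ[ℂ] LinearMap.range φ := LinearEquiv.ofInjective φ hφinj
  let Ψ' : P →ₗ[ℂ] LinearMap.range φ := Ψ.codRestrict (LinearMap.range φ) hΨmem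
  let E₁ : P →ₗ[ℂ] P :=
    (((d : ℂ) ^ 2)⁻¹) • (ι.toAlgHom.toLinearMap ∘ₗ (eφ.symm.toLinearMap ∘ₗ Ψ'))
  have hE₁_def : ∀ q : P, E₁ q = (((d : ℂ) ^ 2)⁻¹) • ι (eφ.symm (Ψ' q)) := fun _ => rfl
  have hιsmul : ∀ (c : ℂ) (m : M₁), ι (c • m) = c • ι m := fun c m =>
    map_smul ι.toAlgHom.toLinearMap c m
  have hE₁_p : ∀ x y : M₁, E₁ (ι x * p * ι y) = (((d : ℂ) ^ 2)⁻¹) • ι (x * y) := by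
    intro x y
    rw [hE₁_def]
    have h1 : Ψ' (ι x * p * ι y) = eφ (x * y) := by
      apply Subtype.ext
      have : ((Ψ' (ι x * p * ι y) : M₁ →ₗ[ℂ] ℂ)) = Ψ (ι x * p * ι y) := rfl
      rw [this, hΨspan]
      rfl
    rw [h1, LinearEquiv.symm_apply_apply]
  -- E₁ lands in ι M₁
  have hE₁_ran : ∀ q : P, ∃ m : M₁, E₁ q = ι m := by
    intro q
    exact ⟨(((d : ℂ) ^ 2)⁻¹) • eφ.symm (Ψ' q), by rw [hE₁_def, hιsmul]⟩
  -- extension helpers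
  have hext : ∀ f g : P →ₗ[ℂ] P,
      (∀ x y : M₁, f (ι x * p * ι y) = g (ι x * p * ι y)) → ∀ q, f q = g q := by
    intro f g h q
    have : f = g := by
      apply LinearMap.ext_on hspan
      rintro t ⟨x, y, rfl⟩
      exact h x y
    rw [this]
  -- E₁ fixes ι M₁
  have hfix : ∀ x : M₁, E₁ (ι x) = ι x := by
    intro x
    have h1 : ι x = ∑ b ∈ B, ι b * p * ι (star b * x) := by
      calc ι x = (∑ b ∈ B, ι b * p * ι (star b)) * ι x := by rw [hA, one_mul]
        _ = ∑ b ∈ B, ι b * p * ι (star b * x) := by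
            rw [Finset.sum_mul]
            refine Finset.sum_congr rfl fun b _ => ?_
            rw [map_mul ι, mul_assoc]
    have h2 : ∀ b ∈ B, E₁ (ι b * p * ι (star b * x))
        = (((d : ℂ) ^ 2)⁻¹) • ι (b * (star b * x)) := fun b _ => hE₁_p b _
    have h3 : (∑ b ∈ B, b * (star b * x)) = ((d : ℂ) ^ 2) • x := by
      calc (∑ b ∈ B, b * (star b * x)) = (∑ b ∈ B, b * star b) * x := by
            rw [Finset.sum_mul]
            exact Finset.sum_congr rfl fun b _ => (mul_assoc _ _ _).symm
        _ = ((d : ℂ) ^ 2) • x := by rw [hBsum, smul_mul_assoc, one_mul]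
    calc E₁ (ι x) = ∑ b ∈ B, E₁ (ι b * p * ι (star b * x)) := by
          conv_lhs => rw [h1]
          rw [map_sum]
      _ = (((d : ℂ) ^ 2)⁻¹) • ι (∑ b ∈ B, b * (star b * x)) := by
          rw [Finset.sum_congr rfl h2, ← Finset.smul_sum, ← map_sum]
      _ = ι x := by
          rw [h3, hιsmul, smul_smul, inv_mul_cancel₀ hd2, one_smul]
  -- bimodule property
  have hbimodL : ∀ (a : M₁) (q : P), E₁ (ι a * q) = ι a * E₁ q := by
    intro a q
    refine hext (E₁ ∘ₗ LinearMap.mulLeft ℂ (ι a)) (LinearMap.mulLeft ℂ (ι a) ∘ₗ E₁) ?_ q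
    intro x y
    simp only [LinearMap.comp_apply, LinearMap.mulLeft_apply]
    have h1 : ι a * (ι x * p * ι y) = ι (a * x) * p * ι y := by rw [map_mul ι]; noncomm_ring
    rw [h1, hE₁_p, hE₁_p, mul_smul_comm, ← map_mul ι, mul_assoc]
  have hbimodR : ∀ (a : M₁) (q : P), E₁ (q * ι a) = E₁ q * ι a := by
    intro a q
    refine hext (E₁ ∘ₗ LinearMap.mulRight ℂ (ι a)) (LinearMap.mulRight ℂ (ι a) ∘ₗ E₁) ?_ q
    intro x y
    simp only [LinearMap.comp_apply, LinearMap.mulRight_apply]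
    have h1 : (ι x * p * ι y) * ι a = ι x * p * ι (y * a) := by rw [map_mul ι]; noncomm_ring
    rw [h1, hE₁_p, hE₁_p, smul_mul_assoc, ← map_mul ι, mul_assoc]
  -- star property
  have hE₁star : ∀ q : P, E₁ (star q) = star (E₁ q) := by
    intro q
    refine Submodule.span_induction ?_ ?_ ?_ ?_ (hmemspan q)
    · rintro t ⟨x, y, rfl⟩
      have l1 : star (ι x * p * ι y) = ι (star y) * p * ι (star x) := by
        rw [star_mul, star_mul, hp_star, ← map_star ι, ← map_star ι]
        noncomm_ring
      have hc : star ((((d : ℂ) ^ 2)⁻¹)) = (((d : ℂ) ^ 2)⁻¹) := by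
        rw [star_inv₀, star_pow, hstar_d]
      rw [l1, hE₁_p, hE₁_p, star_smul, hc, ← map_star ι, star_mul]
    · simp only [star_zero, map_zero]
    · intro a b _ _ ha hb
      rw [star_add, map_add, ha, hb, map_add, star_add]
    · intro c a _ ha
      rw [star_smul, map_smul, ha, map_smul, star_smul]
  -- trace preservation
  have htrpres : ∀ q : P, trP (E₁ q) = trP q := by
    intro q
    have : (trP ∘ₗ E₁) = trP := by
      apply LinearMap.ext_on hspan
      rintro t ⟨x, y, rfl⟩
      simp only [LinearMap.comp_apply]
      rw [hE₁_p, map_smul, htrP_ext, htrP_p, smul_eq_mul]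
    have h2 := congrArg (fun f : P →ₗ[ℂ] ℂ => f q) this
    simpa using h2
  -- (c) basis property
  have hc1 : ∀ q : P,
      q = ∑ b ∈ B, ((d : ℂ) • (ι b * p)) * E₁ (star ((d : ℂ) • (ι b * p)) * q) := by
    intro q
    have key := hext LinearMap.id
      (∑ b ∈ B, (LinearMap.mulLeft ℂ ((d : ℂ) • (ι b * p)) ∘ₗ
        (E₁ ∘ₗ LinearMap.mulLeft ℂ (star ((d : ℂ) • (ι b * p)))))) ?_ q
    · simpa using key
    · intro x y
      simp only [LinearMap.id_apply, LinearMap.sum_apply, LinearMap.comp_apply,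
        LinearMap.mulLeft_apply]
      have hterm : ∀ b ∈ B,
          ((d : ℂ) • (ι b * p)) * E₁ (star ((d : ℂ) • (ι b * p)) * (ι x * p * ι y))
          = ι (b * E (star b * x)) * (p * ι y) := by
        intro b _
        have hsb : star ((d : ℂ) • (ι b * p)) = (d : ℂ) • (p * ι (star b)) := by
          rw [star_smul, hstar_d, star_mul, hp_star, ← map_star ι]
        have l2 : p * ι (star b) * (ι x * p * ι y) = ι (E (star b * x)) * p * ι y := by
          calc p * ι (star b) * (ι x * p * ι y) = (p * ι (star b * x) * p) * ι y := by
                rw [map_mul ι]; noncomm_ring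
            _ = ι (E (star b * x)) * p * ι y := by rw [hpwp]
        have hs1 : ((d : ℂ) * ((d : ℂ) ^ 2)⁻¹) * (d : ℂ) = 1 := by
          field_simp
        have hinner : E₁ (star ((d : ℂ) • (ι b * p)) * (ι x * p * ι y))
            = ((d : ℂ) * ((d : ℂ) ^ 2)⁻¹) • ι (E (star b * x) * y) := by
          rw [hsb, smul_mul_assoc, map_smul, l2, hE₁_p, smul_smul]
        calc ((d : ℂ) • (ι b * p)) * E₁ (star ((d : ℂ) • (ι b * p)) * (ι x * p * ι y))
            = ((d : ℂ) • (ι b * p)) *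
              (((d : ℂ) * ((d : ℂ) ^ 2)⁻¹) • ι (E (star b * x) * y)) := by
              rw [hinner]
          _ = (((d : ℂ) * ((d : ℂ) ^ 2)⁻¹) * (d : ℂ)) •
              ((ι b * p) * ι (E (star b * x) * y)) := by
              rw [mul_smul_comm, smul_mul_assoc, smul_smul]
          _ = (ι b * p) * ι (E (star b * x) * y) := by rw [hs1, one_smul]
          _ = ι (b * E (star b * x)) * (p * ι y) := by
              have hc' := hcomm _ (hE_mem (star b * x))
              calc (ι b * p) * ι (E (star b * x) * y)
                  = ι b * (p * ι (E (star b * x))) * ι y := by rw [map_mul ι]; noncomm_ring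
                _ = ι b * (ι (E (star b * x)) * p) * ι y := by rw [← hc']
                _ = ι (b * E (star b * x)) * (p * ι y) := by rw [map_mul ι]; noncomm_ring
      rw [Finset.sum_congr rfl hterm, ← Finset.sum_mul, ← map_sum, ← hB x, mul_assoc]
  -- (c) sum of squares
  have hc2 : ∑ b ∈ B, ((d : ℂ) • (ι b * p)) * star ((d : ℂ) • (ι b * p))
      = ((d : ℂ) ^ 2) • (1 : P) := by
    have hterm : ∀ b ∈ B, ((d : ℂ) • (ι b * p)) * star ((d : ℂ) • (ι b * p))
        = ((d : ℂ) ^ 2) • (ι b * p * ι (star b)) := by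
      intro b _
      have hsb : star ((d : ℂ) • (ι b * p)) = (d : ℂ) • (p * ι (star b)) := by
        rw [star_smul, hstar_d, star_mul, hp_star, ← map_star ι]
      rw [hsb, smul_mul_smul_comm, ← pow_two]
      congr 1
      calc (ι b * p) * (p * ι (star b)) = ι b * (p * p) * ι (star b) := by noncomm_ring
        _ = ι b * p * ι (star b) := by rw [hp_idem]
    rw [Finset.sum_congr rfl hterm, ← Finset.smul_sum, hA]
  exact ⟨hA, E₁, hE₁_p, hE₁_ran, hfix, fun a q => ⟨hbimodL a q, hbimodR a q⟩,
    hE₁star, htrpres, hc1, hc2⟩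
end
end
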